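/- Let Δ be an n×n real symmetric positive-semidefinite matrix, h > 0, f ∈ ℝⁿ nonzero, and consider the Jacobi approximation scheme with K iterations. Since C(hΔ) is unitary, ‖C(hΔ)^j f‖₂ = ‖f‖₂ for all j, and the relative errors e_j = ‖C(hΔ)^j f − ỹ_j‖₂ / ‖f‖₂ satisfy, for each j = 1, …, r, the recursive bound e_j ≤ e_{j−1} + ‖J^{K+1}‖₂ (1 + e_{j−1}). -/

import Mathlib

open Matrix Complex Finset

noncomputable section

/-- Degree of vertex `i`: sum of weights of edges incident to `i`. -/
def gDegree {n : ℕ} (W : Matrix (Fin n) (Fin n) ℝ) (i : Fin n) : ℝ :=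
  ∑ j ∈ Finset.univ.erase i, W i j

/-- Unnormalized graph Laplacian `Δ_u = D − W`. -/
def unLaplacian {n : ℕ} (W : Matrix (Fin n) (Fin n) ℝ) : Matrix (Fin n) (Fin n) ℝ :=
  Matrix.diagonal (gDegree W) - W

/-- Normalized graph Laplacian `Δ_n = I − D^{-1/2} W D^{-1/2}`. -/
def normLaplacian {n : ℕ} (W : Matrix (Fin n) (Fin n) ℝ) : Matrix (Fin n) (Fin n) ℝ :=
  1 - Matrix.diagonal (fun i => (Real.sqrt (gDegree W i))⁻¹) * W *
      Matrix.diagonal (fun i => (Real.sqrt (gDegree W i))⁻¹)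

/-- Complexification of a real matrix. -/
def cplx {n : ℕ} (Δ : Matrix (Fin n) (Fin n) ℝ) : Matrix (Fin n) (Fin n) ℂ :=
  Δ.map Complex.ofReal

/-- The matrix `hΔ − iI`. -/
def cayleyNum {n : ℕ} (Δ : Matrix (Fin n) (Fin n) ℝ) (hz : ℝ) : Matrix (Fin n) (Fin n) ℂ :=
  (hz : ℂ) • cplx Δ - Complex.I • 1

/-- The matrix `hΔ + iI`. -/
def cayleyDen {n : ℕ} (Δ : Matrix (Fin n) (Fin n) ℝ) (hz : ℝ) : Matrix (Fin n) (Fin n) ℂ :=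
  (hz : ℂ) • cplx Δ + Complex.I • 1

/-- The Cayley transform `C(hΔ) = (hΔ − iI)(hΔ + iI)⁻¹` of a scaled matrix. -/
def cayleyOp {n : ℕ} (Δ : Matrix (Fin n) (Fin n) ℝ) (hz : ℝ) : Matrix (Fin n) (Fin n) ℂ :=
  cayleyNum Δ hz * (cayleyDen Δ hz)⁻¹

/-- Cayley filter `g_{c,h}(Δ) = c₀ I + 2 Re { Σ_{j=1}^r c_j (hΔ−iI)^j (hΔ+iI)^{−j} }`
(entrywise real part). -/
def cayleyFilter {n : ℕ} (Δ : Matrix (Fin n) (Fin n) ℝ) (hz : ℝ) (r : ℕ)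
    (c₀ : ℝ) (c : ℕ → ℂ) : Matrix (Fin n) (Fin n) ℝ :=
  c₀ • (1 : Matrix (Fin n) (Fin n) ℝ) +
    (2 : ℝ) • (∑ j ∈ Finset.Icc 1 r,
      c j • (cayleyNum Δ hz ^ j * ((cayleyDen Δ hz)⁻¹) ^ j)).map Complex.re

/-- Euclidean (`L₂`) norm of a finite signal. -/
def l2norm {n : ℕ} {𝕜 : Type*} [RCLike 𝕜] (v : Fin n → 𝕜) : ℝ :=
  Real.sqrt (∑ i, ‖v i‖ ^ 2)

/-- Operator norm induced by the Euclidean norm. -/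
def l2opNorm {n : ℕ} (A : Matrix (Fin n) (Fin n) ℂ) : ℝ :=
  sSup {t : ℝ | ∃ x : Fin n → ℂ, l2norm x = 1 ∧ t = l2norm (A *ᵥ x)}

/-- Maximum-row-sum norm `‖A‖_∞ = max_i Σ_k |a_{ik}|`. -/
def rowSumNorm {n : ℕ} (A : Matrix (Fin n) (Fin n) ℂ) : ℝ :=
  sSup (Set.range fun i => ∑ k, ‖A i k‖)

/-- Diagonal part `Diag(A)` of a matrix. -/
def diagPart {n : ℕ} (A : Matrix (Fin n) (Fin n) ℂ) : Matrix (Fin n) (Fin n) ℂ :=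
  Matrix.diagonal fun i => A i i

/-- Off-diagonal part `Off(A) = A − Diag(A)` of a matrix. -/
def offPart {n : ℕ} (A : Matrix (Fin n) (Fin n) ℂ) : Matrix (Fin n) (Fin n) ℂ :=
  A - diagPart A

/-- Jacobi iteration matrix `J = −Diag(A)⁻¹ Off(A)`. -/
def jacobiMatrix {n : ℕ} (A : Matrix (Fin n) (Fin n) ℂ) : Matrix (Fin n) (Fin n) ℂ :=
  -((diagPart A)⁻¹ * offPart A)

/-- Jacobi iterations `x^{(k+1)} = J x^{(k)} + b`, initialized at `x^{(0)} = b`. -/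
def jacobiIter {n : ℕ} (J : Matrix (Fin n) (Fin n) ℂ) (b : Fin n → ℂ) : ℕ → (Fin n → ℂ)
  | 0 => b
  | (k+1) => J *ᵥ jacobiIter J b k + b

/-- The Jacobi approximation scheme: `ỹ₀ = f` and, for `j ≥ 1`, `ỹ_j` is the result of `K`
Jacobi iterations for the system `(hΔ+iI) y = (hΔ−iI) ỹ_{j-1}`, initialized at
`b_j = Diag(hΔ+iI)⁻¹ (hΔ−iI) ỹ_{j-1}`. -/
def jacobiScheme {n : ℕ} (Δ : Matrix (Fin n) (Fin n) ℝ) (hz : ℝ) (K : ℕ)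
    (f : Fin n → ℝ) : ℕ → (Fin n → ℂ)
  | 0 => fun i => (f i : ℂ)
  | (j+1) =>
      jacobiIter (jacobiMatrix (cayleyDen Δ hz))
        ((diagPart (cayleyDen Δ hz))⁻¹ *ᵥ (cayleyNum Δ hz *ᵥ jacobiScheme Δ hz K f j)) K

/-- The normalized Jacobi approximation scheme: as `jacobiScheme`, but each `ỹ_j` (`j ≥ 1`)
is rescaled so that `‖ỹ_j‖₂ = ‖f‖₂`. -/
def jacobiSchemeN {n : ℕ} (Δ : Matrix (Fin n) (Fin n) ℝ) (hz : ℝ) (K : ℕ)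
    (f : Fin n → ℝ) : ℕ → (Fin n → ℂ)
  | 0 => fun i => (f i : ℂ)
  | (j+1) =>
      let y := jacobiIter (jacobiMatrix (cayleyDen Δ hz))
        ((diagPart (cayleyDen Δ hz))⁻¹ *ᵥ (cayleyNum Δ hz *ᵥ jacobiSchemeN Δ hz K f j)) K
      (l2norm f / l2norm y) • y

/-- Approximate Cayley filter output `G̃f = c₀ ỹ₀ + 2 Re Σ_{j=1}^r c_j ỹ_j` (Jacobi scheme). -/
def approxCayley {n : ℕ} (Δ : Matrix (Fin n) (Fin n) ℝ) (hz : ℝ) (r : ℕ)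
    (c₀ : ℝ) (c : ℕ → ℂ) (K : ℕ) (f : Fin n → ℝ) : Fin n → ℝ :=
  fun i => c₀ * f i + 2 * (∑ j ∈ Finset.Icc 1 r, c j * jacobiScheme Δ hz K f j i).re

/-- Approximate Cayley filter output for the normalized Jacobi scheme. -/
def approxCayleyN {n : ℕ} (Δ : Matrix (Fin n) (Fin n) ℝ) (hz : ℝ) (r : ℕ)
    (c₀ : ℝ) (c : ℕ → ℂ) (K : ℕ) (f : Fin n → ℝ) : Fin n → ℝ :=
  fun i => c₀ * f i + 2 * (∑ j ∈ Finset.Icc 1 r, c j * jacobiSchemeN Δ hz K f j i).re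

/-- `k`-hop neighborhood of vertex `m` w.r.t. an adjacency relation `A`: all vertices reachable
from `m` by a path of at most `k` edges. -/
def khop {n : ℕ} (A : Fin n → Fin n → Prop) : ℕ → Fin n → Set (Fin n)
  | 0, m => {m}
  | (k+1), m => khop A k m ∪ {l | ∃ v ∈ khop A k m, A v l}

/-- Delta signal at vertex `m`. -/
def deltaSig {n : ℕ} (m : Fin n) : Fin n → ℝ :=
  fun i => if i = m then 1 else 0



/-! ### Auxiliary lemmas for `jacobiScheme_error_recursion` -/

section JacobiAux
open scoped ComplexOrder

open scoped Matrix.Norms.L2Operator in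
lemma l2norm_eq_norm {n : ℕ} (v : Fin n → ℂ) :
    l2norm v = ‖(EuclideanSpace.equiv (Fin n) ℂ).symm v‖ := by
  rw [EuclideanSpace.norm_eq]; rfl

lemma l2norm_nonneg {n : ℕ} (x : Fin n → ℂ) : 0 ≤ l2norm x := Real.sqrt_nonneg _

lemma l2norm_add_le {n : ℕ} (x y : Fin n → ℂ) :
    l2norm (x + y) ≤ l2norm x + l2norm y := by
  simp only [l2norm_eq_norm]
  rw [show (EuclideanSpace.equiv (Fin n) ℂ).symm (x + y)
      = (EuclideanSpace.equiv (Fin n) ℂ).symm x + (EuclideanSpace.equiv (Fin n) ℂ).symm y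
      from rfl]
  exact norm_add_le _ _

lemma l2norm_neg {n : ℕ} (x : Fin n → ℂ) : l2norm (-x) = l2norm x := by
  simp [l2norm]

lemma l2norm_sub_le {n : ℕ} (x y : Fin n → ℂ) :
    l2norm (x - y) ≤ l2norm x + l2norm y := by
  rw [sub_eq_add_neg]
  exact le_trans (l2norm_add_le x (-y)) (by rw [l2norm_neg])

lemma l2norm_smul {n : ℕ} (c : ℂ) (x : Fin n → ℂ) : l2norm (c • x) = ‖c‖ * l2norm x := by
  simp only [l2norm_eq_norm]
  rw [show (EuclideanSpace.equiv (Fin n) ℂ).symm (c • x)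
      = c • (EuclideanSpace.equiv (Fin n) ℂ).symm x from rfl]
  exact norm_smul _ _

lemma l2norm_real {n : ℕ} (f : Fin n → ℝ) : l2norm (fun i => (f i : ℂ)) = l2norm f := by
  simp [l2norm, Complex.norm_real]

lemma l2norm_pos {n : ℕ} (f : Fin n → ℝ) (hf : f ≠ 0) : 0 < l2norm f := by
  rw [l2norm]
  apply Real.sqrt_pos.2
  obtain ⟨i, hi⟩ : ∃ i, f i ≠ 0 := by
    by_contra h; push_neg at h; exact hf (funext h)
  exact Finset.sum_pos' (fun j _ => by positivity)
    ⟨i, Finset.mem_univ i, by have : 0 < ‖f i‖ := norm_pos_iff.2 hi; positivity⟩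

section opn
open scoped Matrix.Norms.L2Operator
variable {n : ℕ}

lemma l2_set_bddAbove (A : Matrix (Fin n) (Fin n) ℂ) :
    BddAbove {t : ℝ | ∃ x : Fin n → ℂ, l2norm x = 1 ∧ t = l2norm (A *ᵥ x)} := by
  refine ⟨‖A‖, ?_⟩
  rintro t ⟨x, hx, rfl⟩
  calc l2norm (A *ᵥ x) = ‖(EuclideanSpace.equiv (Fin n) ℂ).symm (A *ᵥ x)‖ := l2norm_eq_norm _
    _ ≤ ‖A‖ * ‖(EuclideanSpace.equiv (Fin n) ℂ).symm x‖ := A.l2_opNorm_mulVec _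
    _ = ‖A‖ * 1 := by rw [← l2norm_eq_norm, hx]
    _ = ‖A‖ := mul_one _

lemma l2_set_nonempty (hn : Nonempty (Fin n)) (A : Matrix (Fin n) (Fin n) ℂ) :
    {t : ℝ | ∃ x : Fin n → ℂ, l2norm x = 1 ∧ t = l2norm (A *ᵥ x)}.Nonempty := by
  obtain ⟨i0⟩ := hn
  refine ⟨l2norm (A *ᵥ fun j => if j = i0 then 1 else 0),
    fun j => if j = i0 then 1 else 0, ?_, rfl⟩
  simp [l2norm, apply_ite, Finset.sum_ite_eq']

lemma l2opNorm_nonneg (hn : Nonempty (Fin n)) (A : Matrix (Fin n) (Fin n) ℂ) :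
    0 ≤ l2opNorm A := by
  obtain ⟨t, x, hx, rfl⟩ := l2_set_nonempty hn A
  exact le_trans (l2norm_nonneg _) (le_csSup (l2_set_bddAbove A) ⟨x, hx, rfl⟩)

lemma l2norm_mulVec_le (A : Matrix (Fin n) (Fin n) ℂ)
    (w : Fin n → ℂ) : l2norm (A *ᵥ w) ≤ l2opNorm A * l2norm w := by
  rcases eq_or_ne (l2norm w) 0 with h0 | h0
  · have hw : w = 0 := by
      have := l2norm_eq_norm w
      rw [h0] at this
      have : (EuclideanSpace.equiv (Fin n) ℂ).symm w = 0 := by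
        simpa using (norm_eq_zero.mp this.symm)
      simpa using congrArg (EuclideanSpace.equiv (Fin n) ℂ) this
    simp only [hw, Matrix.mulVec_zero, h0, mul_zero]
    simp [l2norm]
  · have hwpos : 0 < l2norm w := lt_of_le_of_ne (l2norm_nonneg w) (Ne.symm h0)
    set c : ℂ := (((l2norm w)⁻¹ : ℝ) : ℂ) with hc
    have hx1 : l2norm (c • w) = 1 := by
      rw [l2norm_smul]
      simp [hc, abs_of_pos hwpos, inv_mul_cancel₀ h0]
    have hmem : l2norm (A *ᵥ (c • w)) ≤ l2opNorm A :=
      le_csSup (l2_set_bddAbove A) ⟨c • w, hx1, rfl⟩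
    rw [Matrix.mulVec_smul, l2norm_smul, hc] at hmem
    have hnm : ‖(((l2norm w)⁻¹ : ℝ) : ℂ)‖ = (l2norm w)⁻¹ := by
      rw [Complex.norm_real, Real.norm_eq_abs, abs_of_pos (by positivity)]
    rw [hnm] at hmem
    calc l2norm (A *ᵥ w) = l2norm w * ((l2norm w)⁻¹ * l2norm (A *ᵥ w)) := by
          field_simp
      _ ≤ l2norm w * l2opNorm A := mul_le_mul_of_nonneg_left hmem (le_of_lt hwpos)
      _ = l2opNorm A * l2norm w := mul_comm _ _
end opn

section algebra
variable {n : ℕ} (Δ : Matrix (Fin n) (Fin n) ℝ) (hz : ℝ)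

lemma cplx_hermitian (hH : Δ.IsHermitian) : (cplx Δ)ᴴ = cplx Δ := by
  ext i j
  simp only [cplx, Matrix.conjTranspose_apply, Matrix.map_apply, Complex.star_def,
    Complex.conj_ofReal]
  have h2 : Δ j i = Δ i j := by
    have := congrFun (congrFun hH i) j
    simpa [Matrix.conjTranspose_apply] using this
  exact_mod_cast h2

lemma num_conjT (hH : Δ.IsHermitian) : (cayleyNum Δ hz)ᴴ = cayleyDen Δ hz := by
  simp [cayleyNum, cayleyDen, Matrix.conjTranspose_sub, Matrix.conjTranspose_smul,
    cplx_hermitian Δ hH, Complex.star_def, Complex.conj_ofReal, Complex.conj_I,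
    sub_eq_add_neg, neg_smul]

lemma den_conjT (hH : Δ.IsHermitian) : (cayleyDen Δ hz)ᴴ = cayleyNum Δ hz := by
  simp [cayleyNum, cayleyDen, Matrix.conjTranspose_add, Matrix.conjTranspose_smul,
    cplx_hermitian Δ hH, Complex.star_def, Complex.conj_ofReal, Complex.conj_I,
    sub_eq_add_neg, neg_smul]

lemma num_mul_den : cayleyNum Δ hz * cayleyDen Δ hz =
    ((hz : ℂ) • cplx Δ) * ((hz : ℂ) • cplx Δ) + 1 := by
  simp only [cayleyNum, cayleyDen]
  rw [sub_mul, mul_add, mul_add]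
  simp only [Matrix.smul_mul, Matrix.mul_smul, smul_smul, Complex.I_mul_I, neg_smul, mul_one,
    one_mul, Matrix.one_mul, Matrix.mul_one]
  module

lemma den_mul_num : cayleyDen Δ hz * cayleyNum Δ hz =
    ((hz : ℂ) • cplx Δ) * ((hz : ℂ) • cplx Δ) + 1 := by
  simp only [cayleyNum, cayleyDen]
  rw [add_mul, mul_sub, mul_sub]
  simp only [Matrix.smul_mul, Matrix.mul_smul, smul_smul, Complex.I_mul_I, neg_smul, mul_one,
    one_mul, Matrix.one_mul, Matrix.mul_one]
  module

lemma commute_num_den : Commute (cayleyNum Δ hz) (cayleyDen Δ hz) := by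
  unfold Commute SemiconjBy
  rw [num_mul_den, den_mul_num]

lemma prod_posdef (hPSD : Δ.PosSemidef) :
    (((hz : ℂ) • cplx Δ) * ((hz : ℂ) • cplx Δ) + 1).PosDef := by
  have hH : ((hz : ℂ) • cplx Δ)ᴴ = (hz : ℂ) • cplx Δ := by
    rw [Matrix.conjTranspose_smul, cplx_hermitian Δ hPSD.1]
    simp [Complex.star_def, Complex.conj_ofReal]
  have hps : (((hz : ℂ) • cplx Δ) * ((hz : ℂ) • cplx Δ)).PosSemidef := by
    have := Matrix.posSemidef_conjTranspose_mul_self ((hz : ℂ) • cplx Δ)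
    rwa [hH] at this
  exact Matrix.PosDef.posSemidef_add hps Matrix.PosDef.one

lemma isUnit_den (hPSD : Δ.PosSemidef) : IsUnit (cayleyDen Δ hz) := by
  have h := (prod_posdef Δ hz hPSD).isUnit
  rw [← num_mul_den Δ hz] at h
  rw [Matrix.isUnit_iff_isUnit_det] at h ⊢
  rw [Matrix.det_mul] at h
  exact isUnit_of_mul_isUnit_right h

lemma isUnit_num (hPSD : Δ.PosSemidef) : IsUnit (cayleyNum Δ hz) := by
  have h := (prod_posdef Δ hz hPSD).isUnit
  rw [← num_mul_den Δ hz] at h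
  rw [Matrix.isUnit_iff_isUnit_det] at h ⊢
  rw [Matrix.det_mul] at h
  exact isUnit_of_mul_isUnit_left h

lemma cayley_unitary (hPSD : Δ.PosSemidef) :
    (cayleyOp Δ hz)ᴴ * cayleyOp Δ hz = 1 := by
  have hD := isUnit_den Δ hz hPSD
  have hN := isUnit_num Δ hz hPSD
  rw [cayleyOp, Matrix.conjTranspose_mul, Matrix.conjTranspose_nonsing_inv,
    den_conjT Δ hz hPSD.1, num_conjT Δ hz hPSD.1]
  have hc : cayleyDen Δ hz * cayleyNum Δ hz = cayleyNum Δ hz * cayleyDen Δ hz :=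
    (commute_num_den Δ hz).symm
  calc (cayleyNum Δ hz)⁻¹ * cayleyDen Δ hz * (cayleyNum Δ hz * (cayleyDen Δ hz)⁻¹)
      = (cayleyNum Δ hz)⁻¹ * (cayleyDen Δ hz * cayleyNum Δ hz) * (cayleyDen Δ hz)⁻¹ := by
        rw [Matrix.mul_assoc, Matrix.mul_assoc, Matrix.mul_assoc]
    _ = (cayleyNum Δ hz)⁻¹ * (cayleyNum Δ hz * cayleyDen Δ hz) * (cayleyDen Δ hz)⁻¹ := by
        rw [hc]
    _ = 1 := by
        rw [← Matrix.mul_assoc,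
          Matrix.nonsing_inv_mul _ ((Matrix.isUnit_iff_isUnit_det _).1 hN), Matrix.one_mul,
          Matrix.mul_nonsing_inv _ ((Matrix.isUnit_iff_isUnit_det _).1 hD)]

lemma cayley_eq_inv_mul (hPSD : Δ.PosSemidef) :
    cayleyOp Δ hz = (cayleyDen Δ hz)⁻¹ * cayleyNum Δ hz := by
  have hD := (Matrix.isUnit_iff_isUnit_det _).1 (isUnit_den Δ hz hPSD)
  have hc := commute_num_den Δ hz
  rw [cayleyOp]
  have h2 : cayleyDen Δ hz * (cayleyNum Δ hz * (cayleyDen Δ hz)⁻¹)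
      = cayleyDen Δ hz * ((cayleyDen Δ hz)⁻¹ * cayleyNum Δ hz) := by
    rw [← Matrix.mul_assoc, ← hc, Matrix.mul_assoc,
      Matrix.mul_nonsing_inv _ hD, Matrix.mul_one, ← Matrix.mul_assoc,
      Matrix.mul_nonsing_inv _ hD, Matrix.one_mul]
  have h3 := congrArg (fun X => (cayleyDen Δ hz)⁻¹ * X) h2
  simpa [← Matrix.mul_assoc, Matrix.nonsing_inv_mul _ hD] using h3

lemma isUnit_diagPart_den : IsUnit (diagPart (cayleyDen Δ hz)) := by
  rw [Matrix.isUnit_iff_isUnit_det, diagPart, Matrix.det_diagonal, isUnit_iff_ne_zero]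
  apply Finset.prod_ne_zero_iff.2
  intro i _
  have : (cayleyDen Δ hz) i i = ((hz * Δ i i : ℝ) : ℂ) + Complex.I := by
    simp [cayleyDen, cplx, Matrix.add_apply, Matrix.smul_apply, Matrix.one_apply]
  rw [this]
  intro h
  have := congrArg Complex.im h
  simp at this
end algebra

lemma sum_sq_eq_dot {n : ℕ} (u : Fin n → ℂ) :
    (∑ i, ‖u i‖ ^ 2) = (star u ⬝ᵥ u).re := by
  rw [dotProduct, Complex.re_sum]
  refine Finset.sum_congr rfl fun i _ => ?_
  have : (star u) i * u i = ((Complex.normSq (u i) : ℝ) : ℂ) := by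
    simp [Pi.star_apply, Complex.star_def, Complex.normSq_eq_conj_mul_self]
  rw [this, Complex.ofReal_re, Complex.normSq_eq_norm_sq]

lemma l2norm_mulVec_of_unitary {n : ℕ} {A : Matrix (Fin n) (Fin n) ℂ}
    (hA : Aᴴ * A = 1) (v : Fin n → ℂ) : l2norm (A *ᵥ v) = l2norm v := by
  unfold l2norm
  congr 1
  rw [sum_sq_eq_dot, sum_sq_eq_dot, Matrix.star_mulVec, Matrix.dotProduct_mulVec,
    Matrix.vecMul_vecMul, hA, Matrix.vecMul_one]

lemma jacobi_closed_form {n : ℕ} (J : Matrix (Fin n) (Fin n) ℂ) (b yhat : Fin n → ℂ)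
    (hfix : yhat = J *ᵥ yhat + b) (k : ℕ) :
    jacobiIter J b k = J ^ k *ᵥ (b - yhat) + yhat := by
  induction k with
  | zero => simp [jacobiIter]
  | succ k ih =>
      rw [jacobiIter, ih, Matrix.mulVec_add, Matrix.mulVec_mulVec, ← pow_succ',
        add_assoc, ← hfix]

lemma jacobi_final {n : ℕ} (J : Matrix (Fin n) (Fin n) ℂ) (b yhat : Fin n → ℂ)
    (hfix : yhat = J *ᵥ yhat + b) (K : ℕ) :
    jacobiIter J b K = yhat - J ^ (K + 1) *ᵥ yhat := by
  rw [jacobi_closed_form J b yhat hfix K]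
  have hb : b - yhat = -(J *ᵥ yhat) := by
    conv_lhs => rw [hfix]
    abel
  rw [hb, Matrix.mulVec_neg, Matrix.mulVec_mulVec, ← pow_succ]
  abel

end JacobiAux


/-- Since `C(hΔ)` is unitary, `‖C(hΔ)^j f‖₂ = ‖f‖₂` for all `j`, and the
relative errors `e_j = ‖C(hΔ)^j f − ỹ_j‖₂ / ‖f‖₂` of the Jacobi approximation scheme satisfy
`e_j ≤ e_{j−1} + ‖J^{K+1}‖₂ (1 + e_{j−1})` for each `j = 1, …, r`. -/
theorem jacobiScheme_error_recursion {n : ℕ} (Δ : Matrix (Fin n) (Fin n) ℝ)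
    (hPSD : Δ.PosSemidef) (hz : ℝ) (hhz : 0 < hz) (K r : ℕ)
    (f : Fin n → ℝ) (hf : f ≠ 0) :
    (∀ j : ℕ, l2norm (cayleyOp Δ hz ^ j *ᵥ fun i => (f i : ℂ)) = l2norm f) ∧
    (∀ j : ℕ, 1 ≤ j → j ≤ r →
      l2norm ((cayleyOp Δ hz ^ j *ᵥ fun i => (f i : ℂ)) - jacobiScheme Δ hz K f j) / l2norm f
        ≤ l2norm ((cayleyOp Δ hz ^ (j - 1) *ᵥ fun i => (f i : ℂ))
              - jacobiScheme Δ hz K f (j - 1)) / l2norm f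
          + l2opNorm (jacobiMatrix (cayleyDen Δ hz) ^ (K + 1)) *
            (1 + l2norm ((cayleyOp Δ hz ^ (j - 1) *ᵥ fun i => (f i : ℂ))
                    - jacobiScheme Δ hz K f (j - 1)) / l2norm f)) := by
  have hn : Nonempty (Fin n) := by
    by_contra h
    exact hf (funext fun i => absurd ⟨i⟩ h)
  have hF : 0 < l2norm f := l2norm_pos f hf
  have hU : (cayleyOp Δ hz)ᴴ * cayleyOp Δ hz = 1 := cayley_unitary Δ hz hPSD
  set fc : Fin n → ℂ := fun i => (f i : ℂ) with hfc
  have P1 : ∀ j : ℕ, l2norm (cayleyOp Δ hz ^ j *ᵥ fc) = l2norm f := by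
    intro j
    induction j with
    | zero => rw [pow_zero, Matrix.one_mulVec, hfc]; exact l2norm_real f
    | succ j ih =>
        rw [pow_succ', ← Matrix.mulVec_mulVec, l2norm_mulVec_of_unitary hU, ih]
  refine ⟨P1, ?_⟩
  rintro j hj1 _
  obtain ⟨m, rfl⟩ : ∃ m, j = m + 1 := ⟨j - 1, (Nat.succ_pred_eq_of_pos hj1).symm⟩
  simp only [Nat.add_sub_cancel]
  have hsch1 : jacobiScheme Δ hz K f (m + 1)
      = jacobiIter (jacobiMatrix (cayleyDen Δ hz))
          ((diagPart (cayleyDen Δ hz))⁻¹ *ᵥ (cayleyNum Δ hz *ᵥ jacobiScheme Δ hz K f m)) K :=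
    rfl
  set C := cayleyOp Δ hz with hC
  set D := cayleyDen Δ hz with hD
  set N := cayleyNum Δ hz with hN
  set Dg := diagPart D with hDg
  set J := jacobiMatrix D with hJ
  set w := jacobiScheme Δ hz K f m with hw
  have hDdet : IsUnit D.det := by
    rw [hD]; exact (Matrix.isUnit_iff_isUnit_det _).1 (isUnit_den Δ hz hPSD)
  have hDgdet : IsUnit Dg.det := by
    rw [hDg, hD]; exact (Matrix.isUnit_iff_isUnit_det _).1 (isUnit_diagPart_den Δ hz)
  have hCDN : C = D⁻¹ * N := by
    rw [hC, hD, hN]; exact cayley_eq_inv_mul Δ hz hPSD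
  have hsch2 : jacobiScheme Δ hz K f (m + 1) = jacobiIter J (Dg⁻¹ *ᵥ (N *ᵥ w)) K := hsch1
  clear_value C D N Dg J w
  clear hsch1
  set yhat := C *ᵥ w with hyhat
  set b := Dg⁻¹ *ᵥ (N *ᵥ w) with hb
  clear_value yhat b
  have hyhat2 : yhat = D⁻¹ *ᵥ (N *ᵥ w) := by
    rw [hyhat, hCDN, ← Matrix.mulVec_mulVec]
  have hNw : N *ᵥ w = D *ᵥ yhat := by
    rw [hyhat2, Matrix.mulVec_mulVec, Matrix.mul_nonsing_inv _ hDdet, Matrix.one_mulVec]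
  have hJD : J + Dg⁻¹ * D = 1 := by
    rw [hJ, jacobiMatrix, offPart, ← hDg, Matrix.mul_sub, neg_sub, sub_add_cancel,
      Matrix.nonsing_inv_mul _ hDgdet]
  have hfix : yhat = J *ᵥ yhat + b := by
    rw [hb, hNw, Matrix.mulVec_mulVec, ← Matrix.add_mulVec, hJD, Matrix.one_mulVec]
  have hscheme : jacobiScheme Δ hz K f (m + 1) = yhat - J ^ (K + 1) *ᵥ yhat := by
    rw [hsch2, jacobi_final J b yhat hfix K]
  set E := C ^ m *ᵥ fc - w with hE
  have herr : C ^ (m + 1) *ᵥ fc - jacobiScheme Δ hz K f (m + 1)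
      = C *ᵥ E + J ^ (K + 1) *ᵥ yhat := by
    rw [hscheme, pow_succ', ← Matrix.mulVec_mulVec, hE, Matrix.mulVec_sub, ← hyhat]
    abel
  set t := l2opNorm (J ^ (K + 1)) with ht
  have ht0 : 0 ≤ t := l2opNorm_nonneg hn _
  have hEn : l2norm (C *ᵥ E) = l2norm E := by
    rw [hC]
    exact l2norm_mulVec_of_unitary (cayley_unitary Δ hz hPSD) E
  have hyn : l2norm yhat ≤ l2norm f + l2norm E := by
    have h1 : yhat = C ^ (m + 1) *ᵥ fc - C *ᵥ E := by
      rw [hE, Matrix.mulVec_sub, pow_succ', ← Matrix.mulVec_mulVec, ← hyhat]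
      abel
    rw [h1]
    refine le_trans (l2norm_sub_le _ _) ?_
    rw [P1 (m + 1), hEn]
  have key : l2norm (C ^ (m + 1) *ᵥ fc - jacobiScheme Δ hz K f (m + 1))
      ≤ l2norm E + t * (l2norm f + l2norm E) := by
    rw [herr]
    refine le_trans (l2norm_add_le _ _) ?_
    rw [hEn]
    have h3 := l2norm_mulVec_le (J ^ (K + 1)) yhat
    have h4 : t * l2norm yhat ≤ t * (l2norm f + l2norm E) :=
      mul_le_mul_of_nonneg_left hyn ht0
    rw [← ht] at h3
    linarith
  have heq : l2norm E / l2norm f + t * (1 + l2norm E / l2norm f)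
      = (l2norm E + t * (l2norm f + l2norm E)) / l2norm f := by
    field_simp
    try ring
  rw [heq]
  exact div_le_div_of_nonneg_right key hF.le


end
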